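/- (Exact Tangent-Secant rule / FDR–Lfdr balance at the optimizer.) Let ε ∈ (0,1) and τ > 0, and define TPR, FPR, FDR, Lfdr as below. Suppose t* > 0 is a point at which the derivative of the function t ↦ TPR(t)/√(TPR(t)+FPR(t)) vanishes (in particular, any interior maximizer of this function). Then Lfdr(t*) = (1 + FDR(t*))/2. -/

import Mathlib

open Filter Set MeasureTheory

noncomputable def gaussPDF (t : ℝ) : ℝ := (Real.sqrt (2 * Real.pi))⁻¹ * Real.exp (-(t ^ 2) / 2)

/-- standard normal CDF Φ -/
noncomputable def normCDF (t : ℝ) : ℝ := ∫ x in Set.Iic t, gaussPDF x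

/-- survival function of |N(τ,1)| -/
noncomputable def psiBar (τ t : ℝ) : ℝ := (1 - normCDF (t - τ)) + normCDF (-t - τ)

noncomputable def tprFn (ε τ t : ℝ) : ℝ := ε * psiBar τ t

noncomputable def fprFn (ε t : ℝ) : ℝ := (1 - ε) * psiBar 0 t

noncomputable def idrFn (ε τ t : ℝ) : ℝ := ε * normCDF (-t - τ)

/-- clipping proxy separation -/
noncomputable def sepFn (ε τ t : ℝ) : ℝ :=
  2 * τ * (tprFn ε τ t - 2 * idrFn ε τ t) / Real.sqrt (tprFn ε τ t + fprFn ε t)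

/-- proxy false discovery rate -/
noncomputable def fdrFn (ε τ t : ℝ) : ℝ := fprFn ε t / (tprFn ε τ t + fprFn ε t)

/-- magnitude of derivative of TPR -/
noncomputable def tprD (ε τ t : ℝ) : ℝ := ε * (gaussPDF (t - τ) + gaussPDF (t + τ))

/-- magnitude of derivative of FPR -/
noncomputable def fprD (ε t : ℝ) : ℝ := 2 * (1 - ε) * gaussPDF t

/-- proxy local false discovery rate -/
noncomputable def lfdrFn (ε τ t : ℝ) : ℝ := fprD ε t / (tprD ε τ t + fprD ε t)

noncomputable def rhoStar (β : ℝ) : ℝ :=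
  if β ≤ 1 / 2 then 0 else if β ≤ 3 / 4 then β - 1 / 2 else (1 - Real.sqrt (1 - β)) ^ 2

noncomputable def qStar (r β : ℝ) : ℝ := if r ≤ β / 3 then 4 * r else (β + r) ^ 2 / (4 * r)

/-- sparsity ε_p = p^{-β} in the ARW model -/
noncomputable def epsP (β : ℝ) (p : ℕ) : ℝ := (p : ℝ) ^ (-β)

/-- strength τ_p = √(2 r log p) in the ARW model -/
noncomputable def tauP (r : ℝ) (p : ℕ) : ℝ := Real.sqrt (2 * r * Real.log p)

/-- threshold t_p(q) = √(2 q log p) -/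
noncomputable def tP (q : ℝ) (p : ℕ) : ℝ := Real.sqrt (2 * q * Real.log p)

/-- folded two-point mixture G_{ε,τ} -/
noncomputable def gMix (ε τ t : ℝ) : ℝ :=
  (1 - ε) * (normCDF t - normCDF (-t)) + ε * (normCDF (t - τ) - normCDF (-t - τ))

/-- ideal HC objective -/
noncomputable def hcObj (ε τ t : ℝ) : ℝ :=
  ((1 - gMix ε τ t) - psiBar 0 t) / Real.sqrt (gMix ε τ t * (1 - gMix ε τ t))

/-- useful feature discovery exponent δ(q) -/
noncomputable def deltaExp (β r q : ℝ) : ℝ :=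
  if q ≤ r then 1 - β else 1 - β - (Real.sqrt q - Real.sqrt r) ^ 2

/-- separation growth exponent γ(q) -/
noncomputable def gammaExp (β r q : ℝ) : ℝ :=
  deltaExp β r q - max (1 - q) (deltaExp β r q) / 2


section Helpers

lemma gaussPDF_pos (t : ℝ) : 0 < gaussPDF t := by
  unfold gaussPDF
  positivity

lemma continuous_gaussPDF : Continuous gaussPDF := by
  unfold gaussPDF; fun_prop

lemma gaussPDF_even (t : ℝ) : gaussPDF (-t) = gaussPDF t := by
  unfold gaussPDF; ring_nf

lemma integrable_gaussPDF : Integrable gaussPDF := by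
  have h : Integrable (fun x : ℝ => Real.exp (-(1/2 : ℝ) * x ^ 2)) :=
    integrable_exp_neg_mul_sq (by norm_num)
  have := h.const_mul (Real.sqrt (2 * Real.pi))⁻¹
  refine this.congr (Filter.Eventually.of_forall fun x => ?_)
  unfold gaussPDF; ring_nf

lemma integral_gaussPDF : ∫ x, gaussPDF x = 1 := by
  unfold gaussPDF
  rw [MeasureTheory.integral_const_mul]
  have h : ∫ x : ℝ, Real.exp (-(x ^ 2) / 2) = Real.sqrt (Real.pi / (1/2)) := by
    rw [← integral_gaussian (1/2)]
    congr 1; ext x; ring_nf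
  rw [h]
  have : Real.pi / (1/2) = 2 * Real.pi := by ring
  rw [this]
  exact inv_mul_cancel₀ (by positivity)

lemma normCDF_pos (t : ℝ) : 0 < normCDF t := by
  unfold normCDF
  rw [setIntegral_pos_iff_support_of_nonneg_ae
    (Filter.Eventually.of_forall fun x => (gaussPDF_pos x).le)
    integrable_gaussPDF.integrableOn]
  have hsupp : Function.support gaussPDF = Set.univ := by
    ext x; simp [Function.mem_support, (gaussPDF_pos x).ne']
  rw [hsupp, Set.univ_inter]
  simp [Real.volume_Iic]

lemma normCDF_le_one (t : ℝ) : normCDF t ≤ 1 := by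
  rw [← integral_gaussPDF]
  exact setIntegral_le_integral integrable_gaussPDF
    (Filter.Eventually.of_forall fun x => (gaussPDF_pos x).le)

lemma hasDerivAt_normCDF (t : ℝ) : HasDerivAt normCDF (gaussPDF t) t := by
  have key : normCDF = fun u => normCDF 0 + ∫ x in (0:ℝ)..u, gaussPDF x := by
    funext u
    rw [← intervalIntegral.integral_Iic_sub_Iic integrable_gaussPDF.integrableOn
      integrable_gaussPDF.integrableOn]
    unfold normCDF; ring
  rw [key]
  exact ((intervalIntegral.integral_hasDerivAt_right
    integrable_gaussPDF.intervalIntegrable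
    (continuous_gaussPDF.stronglyMeasurableAtFilter _ _)
    continuous_gaussPDF.continuousAt).const_add _)

lemma psiBar_pos (τ t : ℝ) : 0 < psiBar τ t := by
  have h1 := normCDF_le_one (t - τ)
  have h2 := normCDF_pos (-t - τ)
  unfold psiBar; linarith

lemma hasDerivAt_psiBar (τ t : ℝ) :
    HasDerivAt (psiBar τ) (-(gaussPDF (t - τ) + gaussPDF (t + τ))) t := by
  have h1 : HasDerivAt (fun u : ℝ => u - τ) 1 t := (hasDerivAt_id t).sub_const τ
  have h2 : HasDerivAt (fun u : ℝ => -u - τ) (-1) t := (hasDerivAt_id t).neg.sub_const τ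
  have d1 := (hasDerivAt_normCDF (t - τ)).comp t h1
  have d2 := (hasDerivAt_normCDF (-t - τ)).comp t h2
  have h := ((hasDerivAt_const t (1:ℝ)).sub d1).add d2
  have he : gaussPDF (-t - τ) = gaussPDF (t + τ) := by
    rw [show -t - τ = -(t + τ) by ring, gaussPDF_even]
  refine h.congr_deriv ?_
  rw [he]; ring

end Helpers

/-- Exact Tangent–Secant rule: at any critical point of t ↦ TPR/√(TPR+FPR),
Lfdr = (1 + FDR)/2. -/
theorem stmt10 (ε τ : ℝ) (hε0 : 0 < ε) (hε1 : ε < 1) (hτ : 0 < τ)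
    (tstar : ℝ) (htstar : 0 < tstar)
    (hderiv : HasDerivAt
      (fun t => tprFn ε τ t / Real.sqrt (tprFn ε τ t + fprFn ε t)) 0 tstar) :
    lfdrFn ε τ tstar = (1 + fdrFn ε τ tstar) / 2 := by
  set a := tprD ε τ tstar with ha_def
  set b := fprD ε tstar with hb_def
  set T := tprFn ε τ tstar with hT_def
  set F := fprFn ε tstar with hF_def
  have ha : 0 < a := by
    rw [ha_def]; unfold tprD
    have := gaussPDF_pos (tstar - τ); have := gaussPDF_pos (tstar + τ); positivity
  have hb : 0 < b := by
    rw [hb_def]; unfold fprD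
    have := gaussPDF_pos tstar
    have : (0:ℝ) < 1 - ε := by linarith
    positivity
  have hTpos : 0 < T := by
    rw [hT_def]; unfold tprFn; have := psiBar_pos τ tstar; positivity
  have hFpos : 0 < F := by
    rw [hF_def]; unfold fprFn; have := psiBar_pos 0 tstar
    have : (0:ℝ) < 1 - ε := by linarith
    positivity
  have hS : 0 < T + F := by linarith
  have hsrt : 0 < Real.sqrt (T + F) := Real.sqrt_pos.mpr hS
  have hT' : HasDerivAt (fun t => tprFn ε τ t) (-a) tstar := by
    have := (hasDerivAt_psiBar τ tstar).const_mul ε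
    refine this.congr_deriv ?_
    rw [ha_def]; unfold tprD; ring
  have hF' : HasDerivAt (fun t => fprFn ε t) (-b) tstar := by
    have := (hasDerivAt_psiBar 0 tstar).const_mul (1 - ε)
    refine this.congr_deriv ?_
    rw [hb_def]; unfold fprD; simp; ring
  have hSum : HasDerivAt (fun t => tprFn ε τ t + fprFn ε t) (-a + -b) tstar := hT'.add hF'
  have hsqrt := hSum.sqrt hS.ne'
  have hdiv := hT'.div hsqrt hsrt.ne'
  have heq := hderiv.unique hdiv
  have hsq : Real.sqrt (T + F) ^ 2 = T + F := Real.sq_sqrt hS.le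
  set s := Real.sqrt (T + F) with hs_def
  have key : T * (a + b) = 2 * a * (T + F) := by
    have h0 : -a * s - T * ((-a + -b) / (2 * s)) = 0 := by
      have hd : (-a * s - T * ((-a + -b) / (2 * s))) / s ^ 2 = 0 := heq.symm
      field_simp at hd
      field_simp
      linarith [hd]
    have h1 : (-a * s - T * ((-a + -b) / (2 * s))) * (2 * s) = 0 := by rw [h0]; ring
    have h2 : -2 * a * s ^ 2 + T * (a + b) = 0 := by
      field_simp at h1
      nlinarith [h1, hsrt]
    nlinarith [h2, hsq]
  unfold lfdrFn fdrFn
  rw [← ha_def, ← hb_def, ← hT_def, ← hF_def]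
  field_simp
  nlinarith [key]
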